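/- Let m(r) = r·√(tanh(r)/r) with K(r) = √(tanh(r)/r). Then for all r > 0, m''(r) = -(1/(4r))·[4r²·K(r)·sech²(r) + K(r)^(-3)·(K(r)² − sech²(r))²]. -/

import Mathlib

noncomputable def K (r : ℝ) : ℝ := Real.sqrt (Real.tanh r / r)

noncomputable def m (r : ℝ) : ℝ := r * K r

open Real

lemma tanh_pos' {r : ℝ} (hr : 0 < r) : 0 < Real.tanh r := by
  rw [Real.tanh_eq_sinh_div_cosh]
  exact div_pos (Real.sinh_pos_iff.2 hr) (Real.cosh_pos r)

lemma hasDerivAt_tanh' (x : ℝ) :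
    HasDerivAt Real.tanh ((Real.cosh x)⁻¹ ^ 2) x := by
  have hc : Real.cosh x ≠ 0 := ne_of_gt (Real.cosh_pos x)
  have h := (Real.hasDerivAt_sinh x).div (Real.hasDerivAt_cosh x) hc
  have hfun : Real.tanh = fun y => Real.sinh y / Real.cosh y :=
    funext fun y => Real.tanh_eq_sinh_div_cosh y
  rw [hfun]
  refine h.congr_deriv ?_
  have := Real.cosh_sq_sub_sinh_sq x
  have hc2 : Real.cosh x ^ 2 ≠ 0 := pow_ne_zero 2 hc
  rw [inv_pow, div_eq_iff hc2, inv_mul_cancel₀ hc2]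
  nlinarith [this]

noncomputable def g (x : ℝ) : ℝ := Real.sqrt (x * Real.tanh x)

noncomputable def g' (x : ℝ) : ℝ :=
  (Real.tanh x + x * (Real.cosh x)⁻¹ ^ 2) / (2 * Real.sqrt (x * Real.tanh x))

lemma hasDerivAt_g {x : ℝ} (hx : 0 < x) : HasDerivAt g (g' x) x := by
  have ht : 0 < x * Real.tanh x := mul_pos hx (tanh_pos' hx)
  have h1 : HasDerivAt (fun y => y * Real.tanh y)
      (Real.tanh x + x * (Real.cosh x)⁻¹ ^ 2) x := by
    have := (hasDerivAt_id x).mul (hasDerivAt_tanh' x)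
    exact this.congr_deriv (by simp)
  have h2 := (Real.hasDerivAt_sqrt (ne_of_gt ht)).comp x h1
  refine h2.congr_deriv ?_
  unfold g'
  field_simp

lemma m_eq_g {x : ℝ} (hx : 0 < x) : m x = g x := by
  unfold m K g
  rw [show Real.tanh x / x = x * Real.tanh x / x ^ 2 by field_simp,
    Real.sqrt_div (mul_nonneg hx.le (tanh_pos' hx).le) _]
  rw [Real.sqrt_sq hx.le]
  field_simp

lemma deriv_m_eq {x : ℝ} (hx : 0 < x) : deriv m =ᶠ[nhds x] g' := by
  have hmem : Set.Ioi (0:ℝ) ∈ nhds x := isOpen_Ioi.mem_nhds hx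
  filter_upwards [hmem] with y hy
  have hy' : (0:ℝ) < y := hy
  have h1 : m =ᶠ[nhds y] g := by
    filter_upwards [isOpen_Ioi.mem_nhds hy'] with z hz
    exact m_eq_g hz
  rw [h1.deriv_eq, (hasDerivAt_g hy').deriv]

theorem whitham_second_derivative_formula :
    ∀ r : ℝ, 0 < r →
      deriv (deriv m) r = -(1 / (4 * r)) *
        (4 * r ^ 2 * K r * (Real.cosh r)⁻¹ ^ 2 +
          ((K r) ^ 3)⁻¹ * ((K r) ^ 2 - (Real.cosh r)⁻¹ ^ 2) ^ 2) := by
  intro r hr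
  have ht : 0 < Real.tanh r := tanh_pos' hr
  have hS : 0 < Real.sqrt (r * Real.tanh r) := Real.sqrt_pos.2 (mul_pos hr ht)
  set S := Real.sqrt (r * Real.tanh r) with hSdef
  have hS2 : S ^ 2 = r * Real.tanh r := Real.sq_sqrt (mul_pos hr ht).le
  have hc : (0:ℝ) < Real.cosh r := Real.cosh_pos r
  -- derivative of g'
  have hK : K r = S / r := by
    unfold K
    rw [show Real.tanh r / r = r * Real.tanh r / r ^ 2 by field_simp,
      Real.sqrt_div (mul_pos hr ht).le _, Real.sqrt_sq hr.le]
  have h2 : deriv (deriv m) r = deriv g' r := (deriv_m_eq hr).deriv_eq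
  -- compute deriv g' r
  have hN : HasDerivAt (fun y => Real.tanh y + y * (Real.cosh y)⁻¹ ^ 2)
      ((Real.cosh r)⁻¹ ^ 2 + ((Real.cosh r)⁻¹ ^ 2
        + r * (2 * (Real.cosh r)⁻¹ * (-Real.sinh r / Real.cosh r ^ 2)))) r := by
    have hinv : HasDerivAt (fun y => (Real.cosh y)⁻¹)
        (-Real.sinh r / Real.cosh r ^ 2) r := by
      exact (Real.hasDerivAt_cosh r).inv (ne_of_gt hc)
    have hpow : HasDerivAt (fun y => (Real.cosh y)⁻¹ ^ 2)
        (2 * (Real.cosh r)⁻¹ ^ 1 * (-Real.sinh r / Real.cosh r ^ 2)) r := hinv.pow 2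
    have := (hasDerivAt_tanh' r).add ((hasDerivAt_id r).mul hpow)
    exact this.congr_deriv (by simp)
  have hD : HasDerivAt (fun y => 2 * Real.sqrt (y * Real.tanh y)) (2 * g' r) r :=
    (hasDerivAt_g hr).const_mul 2
  have hDne : 2 * Real.sqrt (r * Real.tanh r) ≠ 0 := by positivity
  have hdiv := hN.div hD hDne
  have htanh : Real.tanh r = S ^ 2 / r := by
    rw [hS2]; field_simp
  have hsinh : Real.sinh r = Real.tanh r * Real.cosh r := by
    rw [Real.tanh_eq_sinh_div_cosh]
    field_simp
  rw [h2]
  unfold g'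
  rw [show deriv (fun x => (Real.tanh x + x * (Real.cosh x)⁻¹ ^ 2) / (2 * Real.sqrt (x * Real.tanh x))) r = _ from hdiv.deriv]
  unfold g'
  simp only [← hSdef]
  rw [hK, hsinh, htanh]
  have hrne : r ≠ 0 := ne_of_gt hr
  have hSne : S ≠ 0 := ne_of_gt hS
  have hcne : Real.cosh r ≠ 0 := ne_of_gt hc
  field_simp
  ring
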